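/- Let k ≥ 1 and let φ be a Boolean function on V = {0,...,k} with eul(φ) ≥ 0. Then there exists a Boolean function φ_min on V with φ_min ≃ φ such that every satisfying valuation of φ_min has even size. -/
import Mathlib


open scoped Classical

/-- Flip the membership of variable `l` in valuation `ν`. -/
def flipV {k : ℕ} (ν : Finset (Fin (k + 1))) (l : Fin (k + 1)) : Finset (Fin (k + 1)) :=
  if l ∈ ν then ν.erase l else insert l ν

/-- The set of satisfying valuations of a Boolean function on `V = {0,...,k}`. -/
def satSet {k : ℕ} (φ : Finset (Fin (k + 1)) → Bool) : Finset (Finset (Fin (k + 1))) :=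
  Finset.univ.filter (fun ν => φ ν = true)

/-- The Euler characteristic of a Boolean function: `Σ_{ν ⊨ φ} (-1)^{|ν|}`. -/
def eul {k : ℕ} (φ : Finset (Fin (k + 1)) → Bool) : ℤ :=
  ∑ ν ∈ satSet φ, (-1 : ℤ) ^ ν.card

/-- `φ →+ φ'`: there are `ν, l` with `ν ∉ sat(φ)`, `ν^(l) ∉ sat(φ)` and
`sat(φ') = sat(φ) ∪ {ν, ν^(l)}`. -/
def StepPlus (k : ℕ) (φ φ' : Finset (Fin (k + 1)) → Bool) : Prop :=
  ∃ (ν : Finset (Fin (k + 1))) (l : Fin (k + 1)),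
    φ ν = false ∧ φ (flipV ν l) = false ∧
    ∀ μ, (φ' μ = true ↔ φ μ = true ∨ μ = ν ∨ μ = flipV ν l)

/-- `φ →− φ'`: remove two adjacent satisfying valuations. -/
def StepMinus (k : ℕ) (φ φ' : Finset (Fin (k + 1)) → Bool) : Prop :=
  StepPlus k φ' φ

/-- `φ →± φ'`. -/
def StepPM (k : ℕ) (φ φ' : Finset (Fin (k + 1)) → Bool) : Prop :=
  StepPlus k φ φ' ∨ StepMinus k φ φ'

/-- The relation `≃` (equivalently `→±*`): the reflexive transitive closure of `→±`. -/
def EquivPM (k : ℕ) (φ φ' : Finset (Fin (k + 1)) → Bool) : Prop :=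
  Relation.ReflTransGen (StepPM k) φ φ'

section Helpers
variable {k : ℕ}

lemma mem_flipV {ν : Finset (Fin (k+1))} {l m : Fin (k+1)} :
    m ∈ flipV ν l ↔ (if m = l then l ∉ ν else m ∈ ν) := by
  unfold flipV
  by_cases hl : l ∈ ν <;> by_cases hm : m = l <;> simp [hl, hm]

lemma even_card_flipV (ν : Finset (Fin (k+1))) (l : Fin (k+1)) :
    Even (flipV ν l).card ↔ ¬ Even ν.card := by
  unfold flipV
  by_cases hl : l ∈ ν
  · have h1 : 1 ≤ ν.card := Finset.card_pos.mpr ⟨l, hl⟩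
    simp [hl, Finset.card_erase_of_mem hl, Nat.even_sub h1]
  · simp [hl, Finset.card_insert_of_notMem hl, Nat.even_add_one]

lemma flipV_ne (ν : Finset (Fin (k+1))) (l : Fin (k+1)) : flipV ν l ≠ ν := by
  intro h
  have := even_card_flipV ν l
  rw [h] at this
  tauto

lemma neg_one_pow_flipV (ν : Finset (Fin (k+1))) (l : Fin (k+1)) :
    (-1 : ℤ) ^ (flipV ν l).card = -(-1 : ℤ) ^ ν.card := by
  by_cases h : Even ν.card
  · have h2 : ¬ Even (flipV ν l).card := by rw [even_card_flipV]; tauto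
    rw [h.neg_one_pow, (Nat.not_even_iff_odd.mp h2).neg_one_pow]
  · have h2 : Even (flipV ν l).card := (even_card_flipV ν l).mpr h
    rw [h2.neg_one_pow, (Nat.not_even_iff_odd.mp h).neg_one_pow]
    ring

lemma mem_satSet {φ : Finset (Fin (k+1)) → Bool} {ν : Finset (Fin (k+1))} :
    ν ∈ satSet φ ↔ φ ν = true := by
  simp [satSet]

lemma eul_stepPlus {φ φ' : Finset (Fin (k+1)) → Bool} (h : StepPlus k φ φ') :
    eul φ' = eul φ := by
  obtain ⟨ν, l, h1, h2, h3⟩ := h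
  have hsat : satSet φ' = insert ν (insert (flipV ν l) (satSet φ)) := by
    ext μ
    simp only [mem_satSet, Finset.mem_insert, h3 μ]
    tauto
  have hν : ν ∉ insert (flipV ν l) (satSet φ) := by
    simp [mem_satSet, h1, (flipV_ne ν l)]
    exact fun h => (flipV_ne ν l) h.symm
  have hb : flipV ν l ∉ satSet φ := by simp [mem_satSet, h2]
  rw [eul, hsat, Finset.sum_insert hν, Finset.sum_insert hb, neg_one_pow_flipV]
  simp [eul]

lemma eul_equiv {φ φ' : Finset (Fin (k+1)) → Bool} (h : EquivPM k φ φ') :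
    eul φ' = eul φ := by
  induction h with
  | refl => rfl
  | tail _ hstep ih =>
      rcases hstep with hs | hs
      · rw [eul_stepPlus hs, ih]
      · rw [← eul_stepPlus hs, ih]  -- hs : StepPlus k c b? check
end Helpers

section Core
variable {k : ℕ}

lemma stepPM_symm {φ φ' : Finset (Fin (k+1)) → Bool} (h : StepPM k φ φ') : StepPM k φ' φ := by
  rcases h with h | h
  · exact Or.inr h
  · exact Or.inl h

lemma equivPM_symm {φ φ' : Finset (Fin (k+1)) → Bool} (h : EquivPM k φ φ') : EquivPM k φ' φ := by
  induction h with
  | refl => exact Relation.ReflTransGen.refl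
  | tail _ hstep ih =>
      exact Relation.ReflTransGen.trans (Relation.ReflTransGen.single (stepPM_symm hstep)) ih

noncomputable def oddSat (φ : Finset (Fin (k+1)) → Bool) : Finset (Finset (Fin (k+1))) :=
  (satSet φ).filter (fun ν => ¬ Even ν.card)

/-- Removing an adjacent pair of satisfying valuations. -/
lemma remove_pair {φ : Finset (Fin (k+1)) → Bool} {a : Finset (Fin (k+1))} {l : Fin (k+1)}
    (ha : φ a = true) (hb : φ (flipV a l) = true) :
    ∃ φ₂, EquivPM k φ φ₂ ∧
      ∀ x, (φ₂ x = true ↔ φ x = true ∧ x ≠ a ∧ x ≠ flipV a l) := by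
  classical
  refine ⟨fun x => if x = a ∨ x = flipV a l then false else φ x, ?_, ?_⟩
  · refine Relation.ReflTransGen.single (Or.inr ⟨a, l, ?_, ?_, ?_⟩)
    · simp
    · simp
    · intro μ
      by_cases h1 : μ = a
      · simp [h1, ha]
      · by_cases h2 : μ = flipV a l
        · simp [h2, hb]
        · simp [h1, h2]
  · intro x
    by_cases h1 : x = a <;> by_cases h2 : x = flipV a l <;> simp [h1, h2]

/-- Moving a satisfying valuation two steps, to an unsatisfying one. -/
lemma move_pair {φ : Finset (Fin (k+1)) → Bool} {a : Finset (Fin (k+1))} {l l' : Fin (k+1)}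
    (hll' : l ≠ l') (ha : φ a = true) (hc : φ (flipV (flipV a l) l') = false) :
    ∃ φ₂, EquivPM k φ φ₂ ∧
      ∀ x, (φ₂ x = true ↔ (φ x = true ∧ x ≠ a) ∨ x = flipV (flipV a l) l') := by
  classical
  set b := flipV a l with hbdef
  set c := flipV b l' with hcdef
  have hba : b ≠ a := flipV_ne a l
  have hcb : c ≠ b := flipV_ne b l'
  have hca : c ≠ a := by
    intro h
    have h1 : l ∈ b ↔ l ∉ a := by rw [hbdef, mem_flipV]; simp
    have h2 : l ∈ c ↔ l ∈ b := by rw [hcdef, mem_flipV]; simp [hll']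
    rw [h] at h2
    tauto
  by_cases hbv : φ b = true
  · -- remove {a,b}, then add {b,c}
    set φ₁ : Finset (Fin (k+1)) → Bool := fun x => if x = a ∨ x = b then false else φ x with hφ₁
    set φ₂ : Finset (Fin (k+1)) → Bool := fun x => if x = b ∨ x = c then true else φ₁ x with hφ₂
    refine ⟨φ₂, ?_, ?_⟩
    · have s1 : StepPM k φ φ₁ := by
        refine Or.inr ⟨a, l, by simp [hφ₁], by simp [hφ₁, ← hbdef], ?_⟩
        intro μ
        rw [← hbdef]
        by_cases h1 : μ = a
        · simp [h1, ha, hφ₁]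
        · by_cases h2 : μ = b
          · simp [h2, hbv, hφ₁]
          · simp [h1, h2, hφ₁]
      have s2 : StepPM k φ₁ φ₂ := by
        refine Or.inl ⟨b, l', by simp [hφ₁, hba], ?_, ?_⟩
        · rw [← hcdef]; simp only [hφ₁]
          simp [hca, hcb, hc]
        · intro μ
          rw [← hcdef]
          by_cases h1 : μ = b
          · simp [h1, hφ₂]
          · by_cases h2 : μ = c
            · simp [h2, hφ₂]
            · simp [h1, h2, hφ₂]
      exact Relation.ReflTransGen.trans (Relation.ReflTransGen.single s1)
        (Relation.ReflTransGen.single s2)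
    · intro x
      by_cases h1 : x = a
      · simp [h1, hφ₂, hφ₁, hba.symm, hca]
      · by_cases h2 : x = b
        · simp [h2, hφ₂, hbv, hba]
        · by_cases h3 : x = c
          · simp [h3, hφ₂]
          · simp [h1, h2, h3, hφ₂, hφ₁]
  · -- add {b,c}, then remove {a,b}
    set φ₁ : Finset (Fin (k+1)) → Bool := fun x => if x = b ∨ x = c then true else φ x with hφ₁
    set φ₂ : Finset (Fin (k+1)) → Bool := fun x => if x = a ∨ x = b then false else φ₁ x with hφ₂
    have hbv' : φ b = false := by simpa using hbv
    refine ⟨φ₂, ?_, ?_⟩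
    · have s1 : StepPM k φ φ₁ := by
        refine Or.inl ⟨b, l', hbv', by rw [← hcdef]; exact hc, ?_⟩
        intro μ
        rw [← hcdef]
        by_cases h1 : μ = b
        · simp [h1, hφ₁]
        · by_cases h2 : μ = c
          · simp [h2, hφ₁]
          · simp [h1, h2, hφ₁]
      have s2 : StepPM k φ₁ φ₂ := by
        refine Or.inr ⟨a, l, by simp [hφ₂], by rw [← hbdef]; simp [hφ₂], ?_⟩
        intro μ
        rw [← hbdef]
        by_cases h1 : μ = a
        · simp [h1, hφ₂, hφ₁, hba.symm, hca, ha]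
        · by_cases h2 : μ = b
          · simp [h2, hφ₂, hφ₁]
          · simp [h1, h2, hφ₂]
      exact Relation.ReflTransGen.trans (Relation.ReflTransGen.single s1)
        (Relation.ReflTransGen.single s2)
    · intro x
      by_cases h1 : x = a
      · simp [h1, hφ₂]
        intro h; exact absurd h.symm hca
      · by_cases h2 : x = b
        · simp [h2, hφ₂, hφ₁, hbv', hba, Ne.symm hcb]
        · by_cases h3 : x = c
          · simp [h3, hφ₂, hφ₁, hca, hcb]
          · simp [h1, h2, h3, hφ₂, hφ₁]
end Core

section Main
variable {k : ℕ}

lemma exists_even_sat {φ : Finset (Fin (k+1)) → Bool} (h0 : 0 ≤ eul φ)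
    {ν : Finset (Fin (k+1))} (hν : φ ν = true) (hodd : ¬ Even ν.card) :
    ∃ μ, φ μ = true ∧ Even μ.card := by
  by_contra hcon
  push_neg at hcon
  have hall : ∀ μ ∈ satSet φ, (-1 : ℤ) ^ μ.card = -1 := by
    intro μ hμ
    exact (Nat.not_even_iff_odd.mp (hcon μ (mem_satSet.mp hμ))).neg_one_pow
  have he : eul φ = -((satSet φ).card : ℤ) := by
    rw [eul, Finset.sum_congr rfl hall]
    simp
  have hpos : 0 < (satSet φ).card := Finset.card_pos.mpr ⟨ν, mem_satSet.mpr hν⟩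
  rw [he] at h0
  omega

lemma symmdiff_card_zero {ν μ : Finset (Fin (k+1))} (h : (symmDiff ν μ).card = 0) : ν = μ := by
  have h2 := Finset.card_eq_zero.mp h
  ext x
  have := Finset.ext_iff.mp h2 x
  simp [Finset.mem_symmDiff] at this
  tauto

lemma mem_flipV2 {μ : Finset (Fin (k+1))} {l l' : Fin (k+1)} (hll' : l ≠ l') (x : Fin (k+1)) :
    x ∈ flipV (flipV μ l) l' ↔ (if x = l' then l' ∉ μ else if x = l then l ∉ μ else x ∈ μ) := by
  rw [mem_flipV]
  by_cases h1 : x = l'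
  · simp only [h1, if_true]
    rw [mem_flipV]
    simp [Ne.symm hll']
  · simp only [h1, if_false]
    rw [mem_flipV]

lemma symmdiff_flip2 {ν μ : Finset (Fin (k+1))} {l l' : Fin (k+1)} (hll' : l ≠ l')
    (hl : l ∈ symmDiff ν μ) (hl' : l' ∈ symmDiff ν μ) :
    symmDiff ν (flipV (flipV μ l) l') = ((symmDiff ν μ).erase l).erase l' := by
  rw [Finset.mem_symmDiff] at hl hl'
  ext x
  rw [Finset.mem_erase, Finset.mem_erase, Finset.mem_symmDiff, Finset.mem_symmDiff,
    mem_flipV2 hll' x]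
  by_cases h1 : x = l'
  · subst h1
    simp only [if_true]
    constructor
    · rintro (⟨h, hn⟩ | ⟨hn, h⟩) <;> tauto
    · rintro ⟨hne, _⟩; exact absurd rfl hne
  · by_cases h2 : x = l
    · subst h2
      simp only [h1, if_false, if_true]
      constructor
      · rintro (⟨h, hn⟩ | ⟨hn, h⟩) <;> tauto
      · rintro ⟨_, hne, _⟩; exact absurd rfl hne
    · simp only [h1, h2, if_false]
      tauto

/-- Key lemma: if there is an odd satisfying valuation and an even one within
symmetric-difference distance `d`, we can reduce the number of odd satisfying valuations. -/
lemma lemA (d : ℕ) : ∀ (φ : Finset (Fin (k+1)) → Bool) (ν μ : Finset (Fin (k+1))),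
    φ ν = true → ¬ Even ν.card → φ μ = true → Even μ.card → (symmDiff ν μ).card ≤ d →
    ∃ φ', EquivPM k φ φ' ∧ (oddSat φ').card < (oddSat φ).card := by
  induction d using Nat.strong_induction_on with
  | _ d ih =>
  intro φ ν μ hν hνodd hμ hμeven hd
  have hne : ν ≠ μ := by rintro rfl; exact hνodd hμeven
  set e := (symmDiff ν μ).card with he
  have he0 : e ≠ 0 := fun h => hne (symmdiff_card_zero h)
  rcases Nat.lt_or_ge e 2 with h2 | h2
  · -- e = 1 : remove the pair {ν, μ}
    have he1 : e = 1 := by omega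
    obtain ⟨l, hl⟩ := Finset.card_eq_one.mp he1
    have hmem : ∀ x, x ∈ symmDiff ν μ ↔ x = l := by
      intro x; rw [hl]; simp
    have hμf : μ = flipV ν l := by
      ext x
      rw [mem_flipV]
      by_cases h1 : x = l
      · subst h1
        have := (hmem x).mpr rfl
        rw [Finset.mem_symmDiff] at this
        simp only [if_true]
        tauto
      · have : ¬ (x ∈ symmDiff ν μ) := fun hx => h1 ((hmem x).mp hx)
        rw [Finset.mem_symmDiff] at this
        simp only [h1, if_false]
        tauto
    obtain ⟨φ₂, hequiv, hspec⟩ := remove_pair hν (by rw [← hμf]; exact hμ)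
    refine ⟨φ₂, hequiv, ?_⟩
    have hodd2 : oddSat φ₂ = (oddSat φ).erase ν := by
      ext x
      simp only [oddSat, Finset.mem_filter, mem_satSet, Finset.mem_erase, hspec x]
      constructor
      · rintro ⟨⟨hx, hxa, hxb⟩, hxo⟩; exact ⟨hxa, hx, hxo⟩
      · rintro ⟨hxa, hx, hxo⟩
        refine ⟨⟨hx, hxa, ?_⟩, hxo⟩
        rintro rfl
        rw [← hμf] at hxo
        exact hxo hμeven
    rw [hodd2]
    have hνmem : ν ∈ oddSat φ := Finset.mem_filter.mpr ⟨mem_satSet.mpr hν, hνodd⟩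
    exact Finset.card_erase_lt_of_mem hνmem
  · -- e ≥ 2 : move μ two steps closer to ν
    obtain ⟨l, hl, l', hl', hll'⟩ := Finset.one_lt_card.mp (by omega : 1 < (symmDiff ν μ).card)
    have hll'' : l ≠ l' := fun h => hll' h
    set μ'' := flipV (flipV μ l) l' with hμ''
    have hkey : symmDiff ν μ'' = ((symmDiff ν μ).erase l).erase l' := symmdiff_flip2 hll'' hl hl'
    have hcard : (symmDiff ν μ'').card = e - 2 := by
      rw [hkey, Finset.card_erase_of_mem, Finset.card_erase_of_mem hl]
      · omega
      · exact Finset.mem_erase.mpr ⟨Ne.symm hll'', hl'⟩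
    have hμ''even : Even μ''.card := by
      have t1 := even_card_flipV (flipV μ l) l'
      have t2 := even_card_flipV μ l
      rw [hμ'']
      tauto
    by_cases hv : φ μ'' = true
    · exact ih (e - 2) (by omega) φ ν μ'' hν hνodd hv hμ''even (le_of_eq hcard)
    · have hv' : φ μ'' = false := by simpa using hv
      obtain ⟨φ₂, hequiv, hspec⟩ := move_pair hll'' hμ hv'
      have hν₂ : φ₂ ν = true := by
        rw [hspec ν]
        exact Or.inl ⟨hν, hne⟩
      have hμ''₂ : φ₂ μ'' = true := by
        rw [hspec μ'']
        exact Or.inr rfl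
      have hoddeq : oddSat φ₂ = oddSat φ := by
        ext x
        simp only [oddSat, Finset.mem_filter, mem_satSet, hspec x]
        constructor
        · rintro ⟨hx | hx, hxo⟩
          · exact ⟨hx.1, hxo⟩
          · subst hx; exact absurd hμ''even hxo
        · rintro ⟨hx, hxo⟩
          refine ⟨Or.inl ⟨hx, ?_⟩, hxo⟩
          rintro rfl
          exact hxo hμeven
      obtain ⟨φ', he', hlt⟩ := ih (e - 2) (by omega) φ₂ ν μ'' hν₂ hνodd hμ''₂ hμ''even
        (le_of_eq hcard)
      refine ⟨φ', hequiv.trans he', ?_⟩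
      rwa [hoddeq] at hlt

lemma main_aux : ∀ (n : ℕ) (φ : Finset (Fin (k+1)) → Bool), (oddSat φ).card = n → 0 ≤ eul φ →
    ∃ φmin, EquivPM k φ φmin ∧ ∀ ν, φmin ν = true → Even ν.card := by
  intro n
  induction n using Nat.strong_induction_on with
  | _ n ih =>
  intro φ hn heul
  by_cases h0 : (oddSat φ).card = 0
  · refine ⟨φ, Relation.ReflTransGen.refl, fun ν hν => ?_⟩
    by_contra hodd
    have : ν ∈ oddSat φ := Finset.mem_filter.mpr ⟨mem_satSet.mpr hν, hodd⟩
    have := Finset.card_pos.mpr ⟨ν, this⟩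
    omega
  · obtain ⟨ν, hνmem⟩ := Finset.card_pos.mp (Nat.pos_of_ne_zero h0)
    simp only [oddSat, Finset.mem_filter, mem_satSet] at hνmem
    obtain ⟨hν, hνodd⟩ := hνmem
    obtain ⟨μ, hμ, hμeven⟩ := exists_even_sat heul hν hνodd
    obtain ⟨φ', hequiv, hlt⟩ := lemA (symmDiff ν μ).card φ ν μ hν hνodd hμ hμeven le_rfl
    have heul' : 0 ≤ eul φ' := by rw [eul_equiv hequiv]; exact heul
    obtain ⟨φmin, hequiv2, hall⟩ := ih (oddSat φ').card (by omega) φ' rfl heul'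
    exact ⟨φmin, hequiv.trans hequiv2, hall⟩
end Main

/-- if `eul(φ) ≥ 0` then there is `φ_min ≃ φ` all of whose satisfying
valuations have even size. -/
theorem stmt12 (k : ℕ) (hk : 1 ≤ k) (φ : Finset (Fin (k + 1)) → Bool)
    (h : 0 ≤ eul φ) :
    ∃ φmin : Finset (Fin (k + 1)) → Bool,
      EquivPM k φmin φ ∧ ∀ ν, φmin ν = true → Even ν.card := by
  obtain ⟨φmin, hequiv, hall⟩ := main_aux (oddSat φ).card φ rfl h
  exact ⟨φmin, equivPM_symm hequiv, hall⟩
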